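/- For the step density ρ_s on [a,b] defined by ρ_s(x) = ρ_min for x ∈ [a,c) and ρ_s(x) = ρ_max for x ∈ [c,b], with 0 < ρ_min ≤ ρ_max and a ≤ c ≤ b, the weighted average A(c) = ((c²−a²)ρ_min/2 + (b²−c²)ρ_max/2) / ((c−a)ρ_min + (b−c)ρ_max) attains its maximum over c ∈ [a,b] at c* = (a + b·√(ρ_max/ρ_min)) / (1 + √(ρ_max/ρ_min)), and the maximum value equals c*. -/

import Mathlib

open Real

theorem stmt_3 (a b ρmin ρmax : ℝ) (hab : a < b) (hρmin : 0 < ρmin) (hρmax : ρmin ≤ ρmax)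
    (A : ℝ → ℝ)
    (hA : ∀ c, A c = ((c ^ 2 - a ^ 2) * ρmin / 2 + (b ^ 2 - c ^ 2) * ρmax / 2) /
      ((c - a) * ρmin + (b - c) * ρmax)) :
    (∀ c ∈ Set.Icc a b,
      A c ≤ A ((a + b * Real.sqrt (ρmax / ρmin)) / (1 + Real.sqrt (ρmax / ρmin)))) ∧
    A ((a + b * Real.sqrt (ρmax / ρmin)) / (1 + Real.sqrt (ρmax / ρmin))) =
      (a + b * Real.sqrt (ρmax / ρmin)) / (1 + Real.sqrt (ρmax / ρmin)) := by
  set s := Real.sqrt (ρmax / ρmin) with hs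
  have hs1 : 1 ≤ s := by
    rw [hs, show (1:ℝ) = Real.sqrt 1 by simp]
    apply Real.sqrt_le_sqrt
    rw [le_div_iff₀ hρmin]; linarith
  have hs2 : ρmax = s ^ 2 * ρmin := by
    rw [hs, Real.sq_sqrt (div_nonneg (by linarith) hρmin.le)]
    field_simp
  have hs0 : (0:ℝ) < 1 + s := by linarith
  set cs := (a + b * s) / (1 + s) with hcs
  have hcsa : cs - a = s * (b - a) / (1 + s) := by
    rw [hcs]; field_simp; ring
  have hcsb : b - cs = (b - a) / (1 + s) := by
    rw [hcs]; field_simp; ring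
  -- value at cs
  have hDcs : (cs - a) * ρmin + (b - cs) * ρmax = (b - a) * s * ρmin * (1 + s) / (1 + s) := by
    rw [hcsa, hcsb, hs2]; field_simp
  have hDcs_pos : 0 < (cs - a) * ρmin + (b - cs) * ρmax := by
    rw [hDcs]
    exact div_pos (mul_pos (mul_pos (mul_pos (by linarith) (by linarith)) hρmin) hs0) hs0
  have hval : A cs = cs := by
    rw [hA cs, div_eq_iff (ne_of_gt hDcs_pos), hs2, hcs]
    field_simp
    ring
  constructor
  · intro c hc
    obtain ⟨hca, hcb⟩ := hc
    rw [hval, hA c]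
    have hD : 0 < (c - a) * ρmin + (b - c) * ρmax := by
      nlinarith [mul_nonneg (sub_nonneg.2 hcb) (sub_nonneg.2 hρmax)]
    rw [div_le_iff₀ hD]
    -- key inequality: multiply through by (1+s)
    rw [show cs * ((c - a) * ρmin + (b - c) * ρmax)
        = (a + b * s) * ((c - a) * ρmin + (b - c) * ρmax) / (1 + s) by
          rw [hcs]; ring]
    rw [le_div_iff₀ hs0]
    rw [hs2]
    nlinarith [mul_nonneg (mul_nonneg hρmin.le (by linarith : (0:ℝ) ≤ s - 1))
        (sq_nonneg (c - a - s * (b - c)))]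
  · exact hval
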